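/- Let (R,m) be a Noetherian local ring of dimension d and I an m-primary ideal. For any element x ∈ m, the number of minimal generators of I satisfies μ(I) ≤ λ(mI : x / mI), and λ(mI : x / mI) = λ(R/(I + xR)) + μ((I + xR)/xR), where λ denotes length and μ denotes minimal number of generators. -/

import Mathlib

open Finset IsLocalRing

/-- Length of a module: longest chain in its submodule lattice. -/
noncomputable def flen (R : Type*) [CommRing R] (M : Type*) [AddCommGroup M] [Module R M] : ℕ :=
  ((Order.krullDim (Submodule R M)).unbotD 0).toNat

/-- Length `λ(P/N)` of the subquotient of `R` by submodules `N ≤ P`. -/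
noncomputable def lenq {R : Type*} [CommRing R] (P N : Submodule R R) : ℕ :=
  flen R (↥P ⧸ (N.comap P.subtype))

open Order

section Len
variable {R : Type*} [CommRing R] {M : Type*} [AddCommGroup M] [Module R M]
  {M' : Type*} [AddCommGroup M'] [Module R M']

noncomputable def elen (R : Type*) [CommRing R] (M : Type*) [AddCommGroup M] [Module R M] :
    WithBot ℕ∞ := Order.krullDim (Submodule R M)

lemma elen_nonneg : 0 ≤ elen R M := Order.krullDim_nonneg

lemma elen_ne_bot : elen R M ≠ ⊥ := by
  intro h
  simpa [h] using elen_nonneg (R := R) (M := M)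

lemma elen_congr (e : M ≃ₗ[R] M') : elen R M = elen R M' :=
  krullDim_eq_of_orderIso (Submodule.orderIsoMapComap e)

lemma flen_congr (e : M ≃ₗ[R] M') : flen R M = flen R M' := by
  unfold flen
  rw [show Order.krullDim (Submodule R M) = Order.krullDim (Submodule R M') from elen_congr e]

lemma flen_eq {n : ℕ} (h : elen R M = (n : ℕ)) : flen R M = n := by
  unfold flen
  rw [show Order.krullDim (Submodule R M) = (n : WithBot ℕ∞) from h]
  rfl

lemma aux_chain (N : Submodule R M) :
    ∀ (n : ℕ) (c : LTSeries (Submodule R M)), c.length = n →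
    ∃ (a : LTSeries (Submodule R ↥N)) (b : LTSeries (Submodule R (M ⧸ N))),
      a.last = c.last.comap N.subtype ∧ b.last = c.last.map N.mkQ ∧
      c.length ≤ a.length + b.length := by
  intro n
  induction n with
  | zero =>
    intro c hc
    exact ⟨RelSeries.singleton _ _, RelSeries.singleton _ _, rfl, rfl, by omega⟩
  | succ n ih =>
    intro c hc
    obtain ⟨a, b, ha, hb, hab⟩ := ih c.eraseLast (by simp; omega)
    have hE : c.eraseLast.length = n := by simp; omega
    rw [hE] at hab
    have hlt : c.eraseLast.last < c.last := c.eraseLast_last_rel_last (by omega)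
    set P := c.eraseLast.last with hP
    set Q := c.last with hQ
    have hcm : P.comap N.subtype ≤ Q.comap N.subtype := Submodule.comap_mono hlt.le
    have hmm : P.map N.mkQ ≤ Q.map N.mkQ := Submodule.map_mono hlt.le
    have key : P.comap N.subtype < Q.comap N.subtype ∨ P.map N.mkQ < Q.map N.mkQ := by
      rcases hcm.lt_or_eq with h1 | h1
      · exact .inl h1
      rcases hmm.lt_or_eq with h2 | h2
      · exact .inr h2
      exfalso
      apply hlt.ne
      have e1 : P ⊓ N = Q ⊓ N := by
        have := congrArg (Submodule.map N.subtype) h1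
        rw [Submodule.map_comap_subtype, Submodule.map_comap_subtype] at this
        rw [inf_comm P N, inf_comm Q N]; exact this
      have e2 : P ⊔ N = Q ⊔ N := by
        have := congrArg (Submodule.comap N.mkQ) h2
        rwa [Submodule.comap_map_mkQ, Submodule.comap_map_mkQ, sup_comm N P, sup_comm N Q] at this
      exact eq_of_le_of_inf_le_of_sup_le hlt.le e1.ge e2.ge
    rcases hcm.lt_or_eq with h1 | h1
    · rcases hmm.lt_or_eq with h2 | h2
      · refine ⟨a.snoc _ (ha ▸ h1), b.snoc _ (hb ▸ h2), ?_, ?_, ?_⟩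
        · simp
        · simp
        · simp [RelSeries.snoc, RelSeries.append, RelSeries.singleton]; omega
      · refine ⟨a.snoc _ (ha ▸ h1), b, ?_, ?_, ?_⟩
        · simp
        · rw [hb, h2]
        · simp [RelSeries.snoc, RelSeries.append, RelSeries.singleton]; omega
    · rcases key with h2 | h2
      · rw [h1] at h2; exact absurd rfl h2.ne
      refine ⟨a, b.snoc _ (hb ▸ h2), ?_, ?_, ?_⟩
      · rw [ha, h1]
      · simp
      · simp [RelSeries.snoc, RelSeries.append, RelSeries.singleton]; omega

lemma elen_le (N : Submodule R M) : elen R M ≤ elen R ↥N + elen R (M ⧸ N) := by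
  rw [show elen R M = ⨆ (p : LTSeries (Submodule R M)), (p.length : WithBot ℕ∞) from rfl]
  apply iSup_le
  intro c
  obtain ⟨a, b, -, -, hab⟩ := aux_chain N c.length c rfl
  calc ((c.length : ℕ∞) : WithBot ℕ∞) ≤ ((a.length + b.length : ℕ) : WithBot ℕ∞) := by
        exact_mod_cast Nat.cast_le.mpr hab
    _ = (a.length : WithBot ℕ∞) + (b.length : WithBot ℕ∞) := by push_cast; rfl
    _ ≤ elen R ↥N + elen R (M ⧸ N) :=
        add_le_add (Order.LTSeries.length_le_krullDim a) (Order.LTSeries.length_le_krullDim b)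

end Len

section Len2
variable {R : Type*} [CommRing R] {M : Type*} [AddCommGroup M] [Module R M]
  {M' : Type*} [AddCommGroup M'] [Module R M']

lemma exists_series_of_elen {n : ℕ} (h : elen R M = (n : ℕ)) :
    ∃ p : LTSeries (Submodule R M), p.length = n := by
  by_contra hc
  push_neg at hc
  match n, h, hc with
  | 0, h, hc => exact hc (RelSeries.singleton _ ⊥) rfl
  | (k+1), h, hc =>
    have hle : ∀ p : LTSeries (Submodule R M), p.length ≤ k := by
      intro p
      have h1 : (p.length : WithBot ℕ∞) ≤ ((k+1 : ℕ) : WithBot ℕ∞) :=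
        h ▸ Order.LTSeries.length_le_krullDim p
      have h2 : p.length ≤ k + 1 := by exact_mod_cast h1
      have := hc p
      omega
    have : elen R M ≤ ((k : ℕ) : WithBot ℕ∞) := by
      rw [show elen R M = ⨆ (p : LTSeries (Submodule R M)), (p.length : WithBot ℕ∞) from rfl]
      exact iSup_le fun p => by exact_mod_cast Nat.cast_le.mpr (hle p)
    rw [h] at this
    have : (k+1 : ℕ) ≤ k := by exact_mod_cast this
    omega

lemma elen_exists_nat (h1 : elen R M ≠ ⊥) (h2 : elen R M ≠ ⊤) : ∃ n : ℕ, elen R M = (n : ℕ) := by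
  set y := elen R M with hy
  match y, h1, h2 with
  | ⊥, h1, _ => exact absurd rfl h1
  | ((m : ℕ∞) : WithBot ℕ∞), _, h2 =>
    match m with
    | ⊤ => exact absurd (by simp : ((⊤:ℕ∞) : WithBot ℕ∞) = ⊤) h2
    | (n : ℕ) => exact ⟨n, rfl⟩

lemma elen_submodule_le (N : Submodule R M) : elen R ↥N ≤ elen R M :=
  Order.krullDim_le_of_strictMono (Submodule.map N.subtype)
    (Submodule.map_strictMono_of_injective N.injective_subtype)

lemma elen_quotient_le (N : Submodule R M) : elen R (M ⧸ N) ≤ elen R M :=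
  Order.krullDim_le_of_strictMono (Submodule.comap N.mkQ)
    (Submodule.comap_strictMono_of_surjective N.mkQ_surjective)

lemma elen_ge (N : Submodule R M) (hM : elen R M ≠ ⊤) :
    elen R ↥N + elen R (M ⧸ N) ≤ elen R M := by
  have hN : elen R ↥N ≠ ⊤ := fun h => hM (top_le_iff.mp (h ▸ elen_submodule_le N))
  have hQ : elen R (M ⧸ N) ≠ ⊤ := fun h => hM (top_le_iff.mp (h ▸ elen_quotient_le N))
  obtain ⟨a, hA⟩ := elen_exists_nat elen_ne_bot hN
  obtain ⟨b, hB⟩ := elen_exists_nat elen_ne_bot hQ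
  obtain ⟨p, hp⟩ := exists_series_of_elen hA
  obtain ⟨q, hq⟩ := exists_series_of_elen hB
  have hlast : p.last = ⊤ := by
    by_contra hne
    have h1 : ((p.snoc ⊤ (lt_top_iff_ne_top.mpr hne)).length : WithBot ℕ∞) ≤ elen R ↥N :=
      Order.LTSeries.length_le_krullDim _
    rw [hA] at h1
    have : p.length + 1 ≤ a := by
      have := (by exact_mod_cast h1 : (p.snoc ⊤ (lt_top_iff_ne_top.mpr hne)).length ≤ a)
      simpa [RelSeries.snoc, RelSeries.append, RelSeries.singleton] using this
    omega
  have hhead : q.head = ⊥ := by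
    by_contra hne
    have h1 : ((q.cons ⊥ (bot_lt_iff_ne_bot.mpr (hne))).length : WithBot ℕ∞) ≤
        elen R (M ⧸ N) := Order.LTSeries.length_le_krullDim _
    rw [hB] at h1
    have : q.length + 1 ≤ b := by
      have := (by exact_mod_cast h1 :
        (q.cons ⊥ (bot_lt_iff_ne_bot.mpr (hne))).length ≤ b)
      simpa [RelSeries.cons, RelSeries.append, RelSeries.singleton] using this
    omega
  let pm : LTSeries (Submodule R M) := p.map (Submodule.map N.subtype)
    (Submodule.map_strictMono_of_injective N.injective_subtype)
  let qm : LTSeries (Submodule R M) := q.map (Submodule.comap N.mkQ)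
    (Submodule.comap_strictMono_of_surjective N.mkQ_surjective)
  have hconn : pm.last = qm.head := by
    show Submodule.map N.subtype p.last = Submodule.comap N.mkQ q.head
    rw [hlast, hhead]
    rw [Submodule.map_subtype_top]
    rw [show Submodule.comap N.mkQ ⊥ = LinearMap.ker N.mkQ from rfl, Submodule.ker_mkQ]
  have hlen : ((pm.smash qm hconn).length : WithBot ℕ∞) ≤ elen R M :=
    Order.LTSeries.length_le_krullDim _
  have hsl : (pm.smash qm hconn).length = a + b := by
    simp [RelSeries.smash, pm, qm, hp, hq]
  rw [hsl] at hlen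
  rw [hA, hB]
  calc ((a : ℕ∞) : WithBot ℕ∞) + ((b : ℕ∞) : WithBot ℕ∞)
      = ((a + b : ℕ) : WithBot ℕ∞) := by push_cast; rfl
    _ ≤ elen R M := hlen

end Len2

section Len3
variable {R : Type*} [CommRing R] {M : Type*} [AddCommGroup M] [Module R M]

lemma elen_simple_le_one (h : IsSimpleModule R M) : elen R M ≤ (1 : ℕ) := by
  rw [show elen R M = ⨆ (p : LTSeries (Submodule R M)), (p.length : WithBot ℕ∞) from rfl]
  apply iSup_le
  intro c
  by_contra hc
  push_neg at hc
  have hlen : 2 ≤ c.length := by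
    have : (1:ℕ) < c.length := by exact_mod_cast hc
    omega
  have h01 : c ⟨0, by omega⟩ < c ⟨1, by omega⟩ := c.strictMono (Fin.mk_lt_mk.mpr (by omega))
  have h12 : c ⟨1, by omega⟩ < c ⟨2, by omega⟩ := c.strictMono (Fin.mk_lt_mk.mpr (by omega))
  rcases eq_bot_or_eq_top (c ⟨1, by omega⟩) with h | h
  · rw [h] at h01; exact absurd h01 (by simp)
  · rw [h] at h12; exact absurd h12 (by simp)

lemma elen_ne_top_of_finiteLength (h : IsFiniteLength R M) : elen R M ≠ ⊤ := by
  induction h with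
  | @of_subsingleton M iA iM iS =>
    intro htop
    haveI : Subsingleton (Submodule R M) :=
      ⟨fun p q => by ext x; rw [Subsingleton.elim x 0]; simp⟩
    have := Order.krullDim_nonpos_of_subsingleton (α := Submodule R M)
    rw [show Order.krullDim (Submodule R M) = elen R M from rfl, htop] at this
    have h0 := top_le_iff.mp this
    rw [show (0 : WithBot ℕ∞) = ((0:ℕ∞) : WithBot ℕ∞) from rfl,
      show (⊤ : WithBot ℕ∞) = ((⊤:ℕ∞) : WithBot ℕ∞) from rfl, WithBot.coe_inj] at h0
    simp at h0
  | @of_simple_quotient M _ _ N _ _ ih =>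
    intro htop
    have h1 := elen_le N
    have h2 := elen_simple_le_one (inferInstance : IsSimpleModule R (M ⧸ N))
    obtain ⟨n, hn⟩ := elen_exists_nat (elen_ne_bot (R := R) (M := ↥N)) ih
    have : elen R M ≤ ((n : ℕ) : WithBot ℕ∞) + ((1 : ℕ) : WithBot ℕ∞) :=
      h1.trans (add_le_add (le_of_eq hn) h2)
    rw [htop] at this
    have h3 : (⊤ : WithBot ℕ∞) ≤ ((n + 1 : ℕ) : WithBot ℕ∞) := by
      refine this.trans (le_of_eq ?_)
      push_cast; rfl
    have h4 := top_le_iff.mp h3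
    rw [show ((n+1:ℕ) : WithBot ℕ∞) = (((n+1:ℕ) : ℕ∞) : WithBot ℕ∞) from rfl,
      show (⊤ : WithBot ℕ∞) = ((⊤:ℕ∞):WithBot ℕ∞) from rfl, WithBot.coe_inj] at h4
    exact (ENat.coe_ne_top _) h4

lemma elen_ne_top [IsNoetherian R M] [IsArtinian R M] : elen R M ≠ ⊤ :=
  elen_ne_top_of_finiteLength (isFiniteLength_iff_isNoetherian_isArtinian.mpr ⟨‹_›, ‹_›⟩)

lemma flen_add [IsNoetherian R M] [IsArtinian R M] (N : Submodule R M) :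
    flen R M = flen R ↥N + flen R (M ⧸ N) := by
  have hM : elen R M ≠ ⊤ := elen_ne_top
  have hN : elen R ↥N ≠ ⊤ := fun h => hM (top_le_iff.mp (h ▸ elen_submodule_le N))
  have hQ : elen R (M ⧸ N) ≠ ⊤ := fun h => hM (top_le_iff.mp (h ▸ elen_quotient_le N))
  obtain ⟨a, hA⟩ := elen_exists_nat elen_ne_bot hN
  obtain ⟨b, hB⟩ := elen_exists_nat elen_ne_bot hQ
  have heq : elen R M = ((a + b : ℕ) : WithBot ℕ∞) := by
    apply le_antisymm
    · refine (elen_le N).trans (le_of_eq ?_)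
      rw [hA, hB]; push_cast; rfl
    · refine le_trans (le_of_eq ?_) (elen_ge N hM)
      rw [hA, hB]; push_cast; rfl
  rw [flen_eq heq, flen_eq hA, flen_eq hB]

end Len3

section Ideals
variable {R : Type*} [CommRing R]

noncomputable def subquotEquiv (A B : Submodule R R) :
    (↥B ⧸ (Submodule.comap B.subtype A)) ≃ₗ[R] ↥(Submodule.map A.mkQ B) := by
  let f : ↥B →ₗ[R] R ⧸ A := A.mkQ ∘ₗ B.subtype
  have hker : LinearMap.ker f = A.comap B.subtype := by
    show LinearMap.ker (A.mkQ ∘ₗ B.subtype) = _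
    rw [LinearMap.ker_comp, Submodule.ker_mkQ]
  have hrange : LinearMap.range f = B.map A.mkQ := by
    show LinearMap.range (A.mkQ ∘ₗ B.subtype) = _
    rw [LinearMap.range_comp, Submodule.range_subtype]
  exact (Submodule.quotEquivOfEq _ _ hker.symm).trans
    (f.quotKerEquivRange.trans (LinearEquiv.ofEq _ _ hrange))

theorem master (A B : Submodule R R) (hAB : A ≤ B)
    [IsNoetherian R (R ⧸ A)] [IsArtinian R (R ⧸ A)] :
    flen R (R ⧸ A) = lenq B A + flen R (R ⧸ B) := by
  have h1 := flen_add (R := R) (M := R ⧸ A) (Submodule.map A.mkQ B)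
  rw [h1, flen_congr (Submodule.quotientQuotientEquivQuotient A B hAB)]
  congr 1
  exact (flen_congr (subquotEquiv A B)).symm

lemma isArtinian_quot_of_le {A B : Submodule R R} (h : A ≤ B) [IsArtinian R (R ⧸ A)] :
    IsArtinian R (R ⧸ B) := by
  have h' : A ≤ Submodule.comap (LinearMap.id (R := R) (M := R)) B := h
  apply isArtinian_of_surjective (R ⧸ A) (Submodule.mapQ A B LinearMap.id h')
  intro y
  obtain ⟨z, rfl⟩ := Submodule.mkQ_surjective B y
  exact ⟨Submodule.Quotient.mk z, rfl⟩

end Ideals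

section Art
variable {R : Type*} [CommRing R] [IsLocalRing R] [IsNoetherianRing R]

lemma isArtinian_of_torsion (V : Type*) [AddCommGroup V] [Module R V] [Module.Finite R V]
    (h : Module.IsTorsionBySet R V (IsLocalRing.maximalIdeal R : Set R)) : IsArtinian R V := by
  letI : Module (R ⧸ IsLocalRing.maximalIdeal R) V := h.module
  haveI : IsScalarTower R (R ⧸ IsLocalRing.maximalIdeal R) V :=
    Module.IsTorsionBySet.isScalarTower h (S := R)
  haveI : Module.Finite (R ⧸ IsLocalRing.maximalIdeal R) V :=
    Module.Finite.of_restrictScalars_finite R _ _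
  letI : Field (R ⧸ IsLocalRing.maximalIdeal R) :=
    Ideal.Quotient.field (IsLocalRing.maximalIdeal R)
  haveI : IsArtinian (R ⧸ IsLocalRing.maximalIdeal R) V := inferInstance
  let l : V →ₛₗ[Ideal.Quotient.mk (IsLocalRing.maximalIdeal R)] V :=
    { toFun := id, map_add' := fun _ _ => rfl,
      map_smul' := fun r v => (h.mk_smul r v).symm }
  have hbij : Function.Bijective l := Function.bijective_id
  exact (Submodule.orderIsoMapComapOfBijective l hbij).toOrderEmbedding.wellFoundedLT

end Art

section Art2
variable {R : Type*} [CommRing R] [IsLocalRing R] [IsNoetherianRing R]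

lemma isArtinian_quot_pow (n : ℕ) :
    IsArtinian R (R ⧸ ((IsLocalRing.maximalIdeal R ^ n : Ideal R) : Submodule R R)) := by
  induction n with
  | zero =>
    haveI : Subsingleton
        (R ⧸ ((IsLocalRing.maximalIdeal R ^ 0 : Ideal R) : Submodule R R)) := by
      rw [Submodule.Quotient.subsingleton_iff]
      rw [pow_zero, Ideal.one_eq_top]
    infer_instance
  | succ n ih =>
    set m := IsLocalRing.maximalIdeal R with hm
    set A : Submodule R R := ((m ^ (n+1) : Ideal R) : Submodule R R) with hA
    set B : Submodule R R := ((m ^ n : Ideal R) : Submodule R R) with hB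
    have hAB : A ≤ B := Ideal.pow_le_pow_right (by omega)
    rw [isArtinian_iff_submodule_quotient (Submodule.map A.mkQ B)]
    constructor
    · haveI : IsNoetherian R R := inferInstance
      haveI : Module.Finite R (↥B ⧸ Submodule.comap B.subtype A) := by
        haveI : Module.Finite R ↥B :=
          Module.Finite.iff_fg.mpr (IsNoetherian.noetherian B)
        infer_instance
      have hart : IsArtinian R (↥B ⧸ Submodule.comap B.subtype A) := by
        apply isArtinian_of_torsion
        intro x a
        obtain ⟨y, rfl⟩ := Submodule.Quotient.mk_surjective _ x
        rw [← Submodule.Quotient.mk_smul, Submodule.Quotient.mk_eq_zero]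
        show ((a : R) • y : ↥B) ∈ Submodule.comap B.subtype A
        have hy : (y : R) ∈ (m ^ n : Ideal R) := y.2
        have ha : (a : R) ∈ m := a.2
        have : (a : R) * (y : R) ∈ (m ^ (n+1) : Ideal R) := by
          rw [pow_succ']
          exact Ideal.mul_mem_mul ha hy
        simpa using this
      exact isArtinian_of_linearEquiv (subquotEquiv A B)
    · have e := Submodule.quotientQuotientEquivQuotient A B hAB
      haveI := ih
      exact isArtinian_of_linearEquiv e.symm

lemma isArtinian_quot_radical {A : Ideal R}
    (h : IsLocalRing.maximalIdeal R ≤ A.radical) :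
    IsArtinian R (R ⧸ (A : Submodule R R)) := by
  obtain ⟨n, hn⟩ := Ideal.exists_pow_le_of_le_radical_of_fg h (IsNoetherian.noetherian _)
  haveI := isArtinian_quot_pow (R := R) n
  exact isArtinian_quot_of_le (A := ((IsLocalRing.maximalIdeal R ^ n : Ideal R))) hn

end Art2


/-- `x` is integral over the ideal `I`: it satisfies an equation
`x^n + a 1 * x^(n-1) + ⋯ + a n = 0` with `a i ∈ I^i`. -/
def Ideal.IsIntOver {R : Type*} [CommRing R] (I : Ideal R) (x : R) : Prop :=
  ∃ (n : ℕ) (a : ℕ → R), 0 < n ∧ (∀ i ∈ Finset.Icc 1 n, a i ∈ I ^ i) ∧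
    x ^ n + ∑ i ∈ Finset.Icc 1 n, a i * x ^ (n - i) = 0

/-- The integral closure of an ideal (the set of integral elements is an ideal,
so taking the span is harmless). -/
def Ideal.intCl {R : Type*} [CommRing R] (I : Ideal R) : Ideal R :=
  Ideal.span {x | I.IsIntOver x}

/-- Goto's lemma: for an `m`-primary ideal `I` of a Noetherian local ring `(R, m)`
and any `x ∈ m`, `μ(I) ≤ λ((mI : x)/mI)` and
`λ((mI : x)/mI) = λ(R/(I + xR)) + μ((I + xR)/xR)`.
Here `μ(I) = λ(I/mI)` and `μ((I+xR)/xR) = λ((I+xR)/(mI+xR))` (Nakayama). -/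
theorem stmt_2 {R : Type*} [CommRing R] [IsLocalRing R] [IsNoetherianRing R]
    (I : Ideal R) (hI : I.radical = IsLocalRing.maximalIdeal R)
    (x : R) (hx : x ∈ IsLocalRing.maximalIdeal R) :
    lenq I (IsLocalRing.maximalIdeal R * I) ≤
      lenq (Submodule.colon (IsLocalRing.maximalIdeal R * I) (Ideal.span {x}))
        (IsLocalRing.maximalIdeal R * I) ∧
    lenq (Submodule.colon (IsLocalRing.maximalIdeal R * I) (Ideal.span {x}))
        (IsLocalRing.maximalIdeal R * I) =
      flen R (R ⧸ (I ⊔ Ideal.span {x})) +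
        lenq (I ⊔ Ideal.span {x})
          (IsLocalRing.maximalIdeal R * I ⊔ Ideal.span {x}) := by
  set m : Ideal R := IsLocalRing.maximalIdeal R with hm
  set J : Ideal R := m * I with hJ
  set L : Ideal R := Ideal.span {x} with hL
  set K : Ideal R := Submodule.colon J L with hK
  have hmrad : m.radical = m := ((IsLocalRing.maximalIdeal.isMaximal R).isPrime).radical
  have hJrad : J.radical = m := by rw [hJ, Ideal.radical_mul, hmrad, hI, inf_idem]
  haveI hartJ : IsArtinian R (R ⧸ J) := isArtinian_quot_radical (le_of_eq hJrad.symm)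
  haveI hartI : IsArtinian R (R ⧸ I) := isArtinian_quot_radical (le_of_eq hI.symm)
  have hJI : J ≤ I := Ideal.mul_le_right
  have hLm : L ≤ m := Ideal.span_le.mpr (Set.singleton_subset_iff.mpr hx)
  have hJK : J ≤ K := by
    intro r hr
    rw [Submodule.mem_colon]
    intro p _
    rw [smul_eq_mul]
    exact Ideal.mul_mem_right p J hr
  have hIK : I ≤ K := by
    intro r hr
    rw [Submodule.mem_colon]
    intro p hp
    rw [smul_eq_mul, mul_comm]
    exact Ideal.mul_mem_mul (hLm hp) hr
  have h1 : flen R (R ⧸ J) = lenq I J + flen R (R ⧸ I) := master J I hJI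
  have h2 : flen R (R ⧸ J) = lenq K J + flen R (R ⧸ K) := master J K hJK
  have h3 : flen R (R ⧸ I) = lenq K I + flen R (R ⧸ K) := master I K hIK
  have h4 : flen R (R ⧸ J) = lenq (J ⊔ L) J + flen R (R ⧸ (J ⊔ L)) :=
    master J (J ⊔ L) le_sup_left
  haveI : IsArtinian R (R ⧸ (J ⊔ L)) :=
    isArtinian_quot_of_le (A := (J : Submodule R R)) le_sup_left
  have h6 : flen R (R ⧸ (J ⊔ L)) = lenq (I ⊔ L) (J ⊔ L) + flen R (R ⧸ (I ⊔ L)) :=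
    master (J ⊔ L) (I ⊔ L) (sup_le_sup_right hJI L)
  -- h5 : lenq (J ⊔ L) J = flen R (R ⧸ K)
  have h5 : lenq (J ⊔ L) J = flen R (R ⧸ K) := by
    have e1 := flen_congr (subquotEquiv (J : Submodule R R) (J ⊔ L : Ideal R))
    let f : R →ₗ[R] R ⧸ J := (J : Submodule R R).mkQ ∘ₗ LinearMap.toSpanSingleton R R x
    have hker : LinearMap.ker f = K := by
      show LinearMap.ker ((J : Submodule R R).mkQ ∘ₗ LinearMap.toSpanSingleton R R x) = K
      rw [LinearMap.ker_comp, Submodule.ker_mkQ]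
      ext r
      rw [Submodule.mem_comap]
      exact ⟨fun h => Submodule.mem_colon_span_singleton.mpr h,
        fun h => Submodule.mem_colon_span_singleton.mp h⟩
    have hmapJ : Submodule.map (J : Submodule R R).mkQ (J : Submodule R R) = ⊥ := by
      apply le_bot_iff.mp
      rintro _ ⟨y, hy, rfl⟩
      simp only [Submodule.mkQ_apply, Submodule.mem_bot, Submodule.Quotient.mk_eq_zero]
      exact hy
    have hrange : LinearMap.range f = Submodule.map (J : Submodule R R).mkQ (J ⊔ L : Ideal R) := by
      show LinearMap.range ((J : Submodule R R).mkQ ∘ₗ LinearMap.toSpanSingleton R R x) = _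
      rw [LinearMap.range_comp, ← LinearMap.span_singleton_eq_range, Submodule.map_sup, hmapJ,
        bot_sup_eq]
    have e2 : (R ⧸ K) ≃ₗ[R] ↥(Submodule.map (J : Submodule R R).mkQ (J ⊔ L : Ideal R)) :=
      (Submodule.quotEquivOfEq _ _ hker.symm).trans
        (f.quotKerEquivRange.trans (LinearEquiv.ofEq _ _ hrange))
    rw [show lenq (J ⊔ L) J = flen R (↥(J ⊔ L : Ideal R) ⧸
      Submodule.comap (J ⊔ L : Ideal R).subtype (J : Submodule R R)) from rfl, e1,
      ← flen_congr e2]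
  exact ⟨by omega, by omega⟩
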